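/- If f : 2^V → ℝ is a submodular function on a finite ground set V with f(∅) = 0, then the base polyhedron B(f) = {x ∈ ℝ^V : x(X) ≤ f(X) for all X ⊆ V, and x(V) = f(V)} is nonempty. -/
import Mathlib


theorem base_polyhedron_nonempty {V : Type*} [Fintype V] [DecidableEq V] [Nonempty V]
    (f : Finset V → ℝ) (h0 : f ∅ = 0)
    (hsub : ∀ X Y : Finset V, f (X ∪ Y) + f (X ∩ Y) ≤ f X + f Y) :
    ∃ x : V → ℝ,
      (∀ X : Finset V, ∑ i ∈ X, x i ≤ f X) ∧ ∑ i, x i = f Finset.univ := by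
  classical
  set n := Fintype.card V with hn
  let σ : V ≃ Fin n := Fintype.equivFin V
  let S : ℕ → Finset V := fun k => Finset.univ.filter fun v => (σ v : ℕ) < k
  let x : V → ℝ := fun v => f (S ((σ v : ℕ) + 1)) - f (S (σ v))
  have hmem : ∀ (v : V) (k : ℕ), v ∈ S k ↔ (σ v : ℕ) < k := by
    intro v k; simp [S]
  have hS0 : S 0 = ∅ := by
    ext v; simp [hmem]
  have hSn : ∀ k, n ≤ k → S k = Finset.univ := by
    intro k hk; ext v; simp [hmem]; exact lt_of_lt_of_le (σ v).isLt hk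
  have hstep : ∀ (k : ℕ) (hk : k < n), S (k + 1) = insert (σ.symm ⟨k, hk⟩) (S k) := by
    intro k hk; ext v
    simp only [hmem, Finset.mem_insert, Nat.lt_succ_iff_lt_or_eq]
    constructor
    · rintro (h | h)
      · exact Or.inr h
      · left
        have : σ v = ⟨k, hk⟩ := Fin.ext h
        exact σ.injective.eq_iff.mp (by simp [this])
    · rintro (rfl | h)
      · right; simp
      · exact Or.inl h
  have hwnot : ∀ (k : ℕ) (hk : k < n), σ.symm ⟨k, hk⟩ ∉ S k := by
    intro k hk; simp [hmem]
  have main : ∀ (k : ℕ) (X : Finset V), ∑ v ∈ X ∩ S k, x v ≤ f (X ∩ S k) := by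
    intro k
    induction k with
    | zero => intro X; simp [hS0, h0]
    | succ k ih =>
      intro X
      by_cases hk : k < n
      · set w := σ.symm ⟨k, hk⟩ with hw
        have hwS : S (k + 1) = insert w (S k) := hstep k hk
        by_cases hwX : w ∈ X
        · have h1 : X ∩ S (k + 1) = insert w (X ∩ S k) := by
            rw [hwS]; ext v; simp only [Finset.mem_inter, Finset.mem_insert]
            constructor
            · rintro ⟨hv, rfl | hs⟩
              · exact Or.inl rfl
              · exact Or.inr ⟨hv, hs⟩
            · rintro (rfl | ⟨hv, hs⟩)
              · exact ⟨hwX, Or.inl rfl⟩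
              · exact ⟨hv, Or.inr hs⟩
          have hwni : w ∉ X ∩ S k := by
            simp only [Finset.mem_inter, not_and]
            intro _; exact hwnot k hk
          have hxw : x w = f (S (k + 1)) - f (S k) := by
            simp [x, hw]
          have hU : insert w (X ∩ S k) ∪ S k = S (k + 1) := by
            rw [hwS]; ext v
            simp only [Finset.mem_union, Finset.mem_insert, Finset.mem_inter]
            tauto
          have hI : insert w (X ∩ S k) ∩ S k = X ∩ S k := by
            rw [Finset.insert_inter_of_notMem (hwnot k hk), Finset.inter_assoc,
              Finset.inter_self]
          have hsm := hsub (insert w (X ∩ S k)) (S k)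
          rw [hU, hI] at hsm
          rw [h1, Finset.sum_insert hwni, hxw]
          have := ih X
          linarith
        · have h1 : X ∩ S (k + 1) = X ∩ S k := by
            rw [hwS]; ext v
            simp only [Finset.mem_inter, Finset.mem_insert]
            constructor
            · rintro ⟨hv, rfl | hs⟩
              · exact absurd hv hwX
              · exact ⟨hv, hs⟩
            · rintro ⟨hv, hs⟩; exact ⟨hv, Or.inr hs⟩
          rw [h1]; exact ih X
      · have h1 : S (k + 1) = S k := by
          rw [hSn k (le_of_not_gt hk), hSn (k + 1) (by omega)]
        rw [h1]; exact ih X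
  refine ⟨x, ?_, ?_⟩
  · intro X
    have := main n X
    rwa [hSn n le_rfl, Finset.inter_univ] at this
  · have h1 : ∑ v, x v = ∑ j : Fin n, (f (S ((j : ℕ) + 1)) - f (S (j : ℕ))) := by
      exact Fintype.sum_equiv σ _ _ (fun v => rfl)
    rw [h1, Fin.sum_univ_eq_sum_range (fun k => f (S (k + 1)) - f (S k)),
      Finset.sum_range_sub (fun k => f (S k)), hS0, h0, hSn n le_rfl, sub_zero]
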